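/- arXiv:2603.06949 — 4 statements merged into one kernel-verified Lean document; each statement's English description precedes it below -/
import Mathlib

section
/- Let σ : [a,b] → ℝ be C³ and define ν(σ) = ∫_a^b (σ cos θ + σ_θ sin θ) σ (σ_θθ + σ) dθ. Then the first variation of ν at the constant function 1 in the direction v equals [2v sin θ + v_θ cos θ]_a^b + ∫_a^b v cos θ dθ; that is, d/dε|_{ε=0} ν(1+εv) = 2v(b)sin b − 2v(a)sin a + v_θ(b)cos b − v_θ(a)cos a + ∫_a^b v cos θ dθ. -/
open Real Set intervalIntegral

/-- with ν(σ) = ∫_a^b (σ cos θ + σ_θ sin θ) σ(σ_θθ + σ) dθ, the first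
variation of ν at the constant function 1 in the direction v equals
[2v sin θ + v_θ cos θ]_a^b + ∫_a^b v cos θ dθ. -/
theorem stmt_4 (a b : ℝ) (hab : a ≤ b) (v : ℝ → ℝ) (hv : ContDiff ℝ 3 v) :
    HasDerivAt
      (fun ε : ℝ => ∫ θ in a..b,
        ((1 + ε * v θ) * Real.cos θ + deriv (fun x => 1 + ε * v x) θ * Real.sin θ) *
          (1 + ε * v θ) * (deriv (deriv (fun x => 1 + ε * v x)) θ + (1 + ε * v θ)))
      (2 * v b * Real.sin b - 2 * v a * Real.sin a +
        deriv v b * Real.cos b - deriv v a * Real.cos a +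
        ∫ θ in a..b, v θ * Real.cos θ) 0 := by
  -- regularity facts
  have hv3 : ContDiff ℝ ((2:ℕ) + 1) v := by exact_mod_cast hv
  have hdv : ContDiff ℝ 2 (deriv v) := (contDiff_succ_iff_deriv.mp hv3).2.2
  have hdv2 : ContDiff ℝ ((1:ℕ) + 1) (deriv v) := by exact_mod_cast hdv
  have hddv : ContDiff ℝ 1 (deriv (deriv v)) := (contDiff_succ_iff_deriv.mp hdv2).2.2
  have cv : Continuous v := hv.continuous
  have cdv : Continuous (deriv v) := hdv.continuous
  have cddv : Continuous (deriv (deriv v)) := hddv.continuous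
  have hvd : ∀ x, HasDerivAt v (deriv v x) x :=
    fun x => (hv.differentiable (by norm_num) x).hasDerivAt
  have hdvd : ∀ x, HasDerivAt (deriv v) (deriv (deriv v) x) x :=
    fun x => (hdv.differentiable (by norm_num) x).hasDerivAt
  -- simplify inner derivatives
  have hD : ∀ ε : ℝ, deriv (fun x => 1 + ε * v x) = fun θ => ε * deriv v θ := by
    intro ε; funext θ; simp [deriv_const_add, deriv_const_mul_field]
  have hDD : ∀ ε : ℝ, deriv (deriv (fun x => 1 + ε * v x)) = fun θ => ε * deriv (deriv v) θ := by
    intro ε; rw [hD]; funext θ; simp [deriv_const_mul_field]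
  -- polynomial coefficients
  set P1 : ℝ → ℝ := fun θ => 3 * v θ * Real.cos θ + deriv v θ * Real.sin θ
      + deriv (deriv v) θ * Real.cos θ with hP1
  set P2 : ℝ → ℝ := fun θ =>
      (v θ * Real.cos θ + deriv v θ * Real.sin θ) * (v θ + (deriv (deriv v) θ + v θ))
      + Real.cos θ * (v θ * (deriv (deriv v) θ + v θ)) with hP2
  set P3 : ℝ → ℝ := fun θ =>
      (v θ * Real.cos θ + deriv v θ * Real.sin θ) * v θ * (deriv (deriv v) θ + v θ) with hP3
  have cP1 : Continuous P1 := by fun_prop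
  have cP2 : Continuous P2 := by fun_prop
  have cP3 : Continuous P3 := by fun_prop
  have iP1 : IntervalIntegrable P1 MeasureTheory.volume a b := cP1.intervalIntegrable a b
  have iP2 : IntervalIntegrable P2 MeasureTheory.volume a b := cP2.intervalIntegrable a b
  have iP3 : IntervalIntegrable P3 MeasureTheory.volume a b := cP3.intervalIntegrable a b
  have icos : IntervalIntegrable Real.cos MeasureTheory.volume a b :=
    Real.continuous_cos.intervalIntegrable a b
  -- the function of ε is a cubic polynomial
  have key : (fun ε : ℝ => ∫ θ in a..b,
        ((1 + ε * v θ) * Real.cos θ + deriv (fun x => 1 + ε * v x) θ * Real.sin θ) *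
          (1 + ε * v θ) * (deriv (deriv (fun x => 1 + ε * v x)) θ + (1 + ε * v θ)))
      = fun ε : ℝ => (∫ θ in a..b, Real.cos θ) + ε * (∫ θ in a..b, P1 θ)
          + ε ^ 2 * (∫ θ in a..b, P2 θ) + ε ^ 3 * (∫ θ in a..b, P3 θ) := by
    funext ε
    rw [hDD, hD]
    have : (fun θ => ((1 + ε * v θ) * Real.cos θ + (ε * deriv v θ) * Real.sin θ) *
          (1 + ε * v θ) * ((ε * deriv (deriv v) θ) + (1 + ε * v θ)))
        = fun θ => Real.cos θ + ε * P1 θ + ε ^ 2 * P2 θ + ε ^ 3 * P3 θ := by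
      funext θ; simp only [hP1, hP2, hP3]; ring
    rw [this, intervalIntegral.integral_add, intervalIntegral.integral_add,
      intervalIntegral.integral_add, intervalIntegral.integral_const_mul,
      intervalIntegral.integral_const_mul, intervalIntegral.integral_const_mul]
    · exact icos
    · exact iP1.const_mul ε
    · exact icos.add (iP1.const_mul ε)
    · exact iP2.const_mul (ε ^ 2)
    · exact (icos.add (iP1.const_mul ε)).add (iP2.const_mul (ε ^ 2))
    · exact iP3.const_mul (ε ^ 3)
  rw [key]
  -- integration by parts to identify ∫ P1
  have parts1 : ∫ θ in a..b, (deriv v θ * Real.sin θ + v θ * Real.cos θ)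
      = v b * Real.sin b - v a * Real.sin a :=
    intervalIntegral.integral_deriv_mul_eq_sub (fun x _ => hvd x)
      (fun x _ => Real.hasDerivAt_sin x) (cdv.intervalIntegrable a b)
      (Real.continuous_cos.intervalIntegrable a b)
  have parts2 : ∫ θ in a..b, (deriv (deriv v) θ * Real.cos θ + deriv v θ * (-Real.sin θ))
      = deriv v b * Real.cos b - deriv v a * Real.cos a :=
    intervalIntegral.integral_deriv_mul_eq_sub (fun x _ => hdvd x)
      (fun x _ => Real.hasDerivAt_cos x) (cddv.intervalIntegrable a b)
      ((Real.continuous_sin.neg).intervalIntegrable a b)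
  have hI1 : ∫ θ in a..b, P1 θ
      = 2 * v b * Real.sin b - 2 * v a * Real.sin a +
        deriv v b * Real.cos b - deriv v a * Real.cos a +
        ∫ θ in a..b, v θ * Real.cos θ := by
    have hsplit : (fun θ => P1 θ) = fun θ =>
        v θ * Real.cos θ + 2 * (deriv v θ * Real.sin θ + v θ * Real.cos θ)
          + (deriv (deriv v) θ * Real.cos θ + deriv v θ * (-Real.sin θ)) := by
      funext θ; simp only [hP1]; ring
    have ivc : IntervalIntegrable (fun θ => v θ * Real.cos θ) MeasureTheory.volume a b :=
      (cv.mul Real.continuous_cos).intervalIntegrable a b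
    have i1 : IntervalIntegrable (fun θ => deriv v θ * Real.sin θ + v θ * Real.cos θ)
        MeasureTheory.volume a b :=
      ((cdv.mul Real.continuous_sin).add (cv.mul Real.continuous_cos)).intervalIntegrable a b
    have i2 : IntervalIntegrable
        (fun θ => deriv (deriv v) θ * Real.cos θ + deriv v θ * (-Real.sin θ))
        MeasureTheory.volume a b :=
      ((cddv.mul Real.continuous_cos).add (cdv.mul Real.continuous_sin.neg)).intervalIntegrable a b
    rw [hsplit, intervalIntegral.integral_add (ivc.add (i1.const_mul 2)) i2,
      intervalIntegral.integral_add ivc (i1.const_mul 2),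
      intervalIntegral.integral_const_mul, parts1, parts2]
    ring
  rw [← hI1]
  -- derivative of the cubic polynomial at 0
  have : HasDerivAt (fun ε : ℝ => (∫ θ in a..b, Real.cos θ) + ε * (∫ θ in a..b, P1 θ)
          + ε ^ 2 * (∫ θ in a..b, P2 θ) + ε ^ 3 * (∫ θ in a..b, P3 θ))
      ((∫ θ in a..b, P1 θ) + 2 * 0 ^ 1 * (∫ θ in a..b, P2 θ)
        + 3 * 0 ^ 2 * (∫ θ in a..b, P3 θ)) 0 := by
    have h0 : HasDerivAt (fun ε : ℝ => ε) 1 0 := hasDerivAt_id 0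
    have h1 : HasDerivAt (fun ε : ℝ => ε * (∫ θ in a..b, P1 θ)) (∫ θ in a..b, P1 θ) 0 := by
      simpa using (hasDerivAt_id (0:ℝ)).mul_const (∫ θ in a..b, P1 θ)
    have h2 : HasDerivAt (fun ε : ℝ => ε ^ 2 * (∫ θ in a..b, P2 θ))
        (2 * 0 ^ 1 * (∫ θ in a..b, P2 θ)) 0 := by
      simpa using (hasDerivAt_pow 2 (0:ℝ)).mul_const (∫ θ in a..b, P2 θ)
    have h3 : HasDerivAt (fun ε : ℝ => ε ^ 3 * (∫ θ in a..b, P3 θ))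
        (3 * 0 ^ 2 * (∫ θ in a..b, P3 θ)) 0 := by
      simpa using (hasDerivAt_pow 3 (0:ℝ)).mul_const (∫ θ in a..b, P3 θ)
    exact ((h1.const_add _).add h2).add h3
  simpa using this
end

section
/- Let λ : [0,T) → (0,∞) be C¹ with λ(t) → ∞ as t → T, and suppose there is C > 0 such that 2 − C/Λ − CΛ/λ² ≤ 2λ_t/λ³ ≤ 2 + C/Λ + CΛ/λ² for all t, where Λ(t) = (2(T−t))^{−1/2}. Then there exists C' > 0 such that |λ(t)^{−2} − Λ(t)^{−2}| ≤ C' Λ(t)^{−3} for all t ∈ [0,T); equivalently 1/λ² = 1/Λ² + O(Λ^{−3}). -/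
open Real Set Filter

private lemma aux_le (a T B L : ℝ) (haT : a < T) (g g' : ℝ → ℝ)
    (hg : ∀ s ∈ Set.Ico a T, HasDerivAt g (g' s) s)
    (hB : ∀ s ∈ Set.Ico a T, -B ≤ g' s)
    (hlim : Filter.Tendsto g (nhdsWithin T (Set.Iio T)) (nhds L)) :
    g a ≤ L + B * (T - a) := by
  set ψ : ℝ → ℝ := fun s => g s + B * s with hψ
  have hψd : ∀ s ∈ Set.Ico a T, HasDerivAt ψ (g' s + B) s := by
    intro s hs
    exact ((hg s hs).add ((hasDerivAt_id s).const_mul B)).congr_deriv (by ring)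
  have hmono : MonotoneOn ψ (Set.Ico a T) := by
    apply monotoneOn_of_deriv_nonneg (convex_Ico a T)
    · intro s hs; exact (hψd s hs).continuousAt.continuousWithinAt
    · intro s hs
      rw [interior_Ico] at hs
      exact (hψd s (Set.Ioo_subset_Ico_self hs)).differentiableAt.differentiableWithinAt
    · intro s hs
      rw [interior_Ico] at hs
      rw [(hψd s (Set.Ioo_subset_Ico_self hs)).deriv]
      linarith [hB s (Set.Ioo_subset_Ico_self hs)]
  have hev : ∀ᶠ s in nhdsWithin T (Set.Iio T), ψ a ≤ ψ s := by
    filter_upwards [self_mem_nhdsWithin,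
      (eventually_gt_nhds haT).filter_mono nhdsWithin_le_nhds] with s hs1 hs2
    exact hmono ⟨le_refl a, haT⟩ ⟨le_of_lt hs2, hs1⟩ (le_of_lt hs2)
  have hlim2 : Filter.Tendsto ψ (nhdsWithin T (Set.Iio T)) (nhds (L + B * T)) :=
    hlim.add (((continuous_const.mul continuous_id).tendsto T).mono_left nhdsWithin_le_nhds)
  have h := ge_of_tendsto hlim2 hev
  simp only [hψ] at h
  linarith

private lemma arith_final (C E s0 u d a : ℝ) (hC : 0 < C) (hE : 1 ≤ E)
    (hs0 : 0 < s0) (hu : 0 < u) (hus : u ≤ s0) (hd : 0 < d)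
    (hup : a ≤ (1 + C * u * E) * ((2 + C * u) * d))
    (hlo : (2 - (C * E + 2 * C) * u) * d ≤ a) :
    |a - 2 * d| ≤ (C + 2 * C * E + C ^ 2 * E * s0 + C * E + 1) * (u * (2 * d)) := by
  have hE0 : (0:ℝ) ≤ E := by linarith
  have hP : 0 ≤ u * d := by positivity
  rw [abs_le]
  constructor
  · nlinarith [mul_nonneg (mul_nonneg hC.le hE0) hP,
      mul_nonneg (mul_nonneg (mul_nonneg (mul_nonneg hC.le hC.le) hE0) hs0.le) hP]
  · nlinarith [mul_nonneg (mul_nonneg (mul_nonneg (mul_nonneg hC.le hC.le) hE0) hd.le)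
        (mul_nonneg hu.le (sub_nonneg.2 hus)),
      mul_nonneg (mul_nonneg hC.le hE0) hP, mul_nonneg hC.le hP]

private lemma lower_est (C E u d em a : ℝ) (hC : 0 < C) (hE : 1 ≤ E) (hu : 0 < u)
    (hd : 0 < d) (heml : 1 - C * u ≤ em) (hle1 : em ≤ 1)
    (hflb : em * ((2 - C * u * E) * d) ≤ a) :
    (2 - (C * E + 2 * C) * u) * d ≤ a := by
  rcases le_or_gt 0 (2 - C * u * E) with hc | hc
  · have k1 : (1 - C * u) * (2 - C * u * E) ≤ em * (2 - C * u * E) :=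
      mul_le_mul_of_nonneg_right heml hc
    have k2 : ((1 - C * u) * (2 - C * u * E)) * d ≤ (em * (2 - C * u * E)) * d :=
      mul_le_mul_of_nonneg_right k1 hd.le
    nlinarith [k2, mul_nonneg (mul_nonneg (mul_nonneg (mul_nonneg hC.le hC.le)
      (mul_nonneg hu.le hu.le)) (by linarith : (0:ℝ) ≤ E)) hd.le]
  · have k1 : (1 - em) * (2 - C * u * E) ≤ 0 :=
      mul_nonpos_of_nonneg_of_nonpos (by linarith) hc.le
    have k2 : 2 - (C * E + 2 * C) * u ≤ em * (2 - C * u * E) := by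
      nlinarith [k1, mul_nonneg hC.le hu.le]
    have k3 := mul_le_mul_of_nonneg_right k2 hd.le
    nlinarith [k3]

/-- if λ is C¹ on [0,T), λ → ∞ as t → T, and
2 − C/Λ − CΛ/λ² ≤ 2λ_t/λ³ ≤ 2 + C/Λ + CΛ/λ² with Λ = (2(T−t))^{−1/2}, then
1/λ² = 1/Λ² + O(Λ^{−3}), i.e. |λ⁻² − 2(T−t)| ≤ C'·(√(2(T−t)))³. -/
theorem stmt_9 (T C : ℝ) (hT : 0 < T) (hC : 0 < C) (lam lam' : ℝ → ℝ)
    (hpos : ∀ t ∈ Set.Ico (0:ℝ) T, 0 < lam t)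
    (hd : ∀ t ∈ Set.Ico (0:ℝ) T, HasDerivAt lam (lam' t) t)
    (hcont : ContinuousOn lam' (Set.Ico (0:ℝ) T))
    (hlim : Filter.Tendsto lam (nhdsWithin T (Set.Iio T)) Filter.atTop)
    (hlb : ∀ t ∈ Set.Ico (0:ℝ) T,
      2 - C * Real.sqrt (2 * (T - t)) - C * ((lam t)^2 * Real.sqrt (2 * (T - t)))⁻¹ ≤
        2 * lam' t / (lam t)^3)
    (hub : ∀ t ∈ Set.Ico (0:ℝ) T,
      2 * lam' t / (lam t)^3 ≤
        2 + C * Real.sqrt (2 * (T - t)) + C * ((lam t)^2 * Real.sqrt (2 * (T - t)))⁻¹) :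
    ∃ C' > 0, ∀ t ∈ Set.Ico (0:ℝ) T,
      |((lam t)^2)⁻¹ - 2 * (T - t)| ≤ C' * (Real.sqrt (2 * (T - t)))^3 := by
  set σ : ℝ → ℝ := fun s => Real.sqrt (2 * (T - s)) with hσdef
  set f : ℝ → ℝ := fun s => ((lam s)^2)⁻¹ with hfdef
  have hσpos : ∀ s ∈ Set.Ico (0:ℝ) T, 0 < σ s := fun s hs =>
    Real.sqrt_pos.2 (by nlinarith [hs.2])
  have hσsq : ∀ s ∈ Set.Ico (0:ℝ) T, (σ s)^2 = 2 * (T - s) := fun s hs =>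
    Real.sq_sqrt (by nlinarith [hs.2])
  set σ0 : ℝ := Real.sqrt (2 * T) with hσ0def
  have hσ0 : ∀ s ∈ Set.Ico (0:ℝ) T, σ s ≤ σ0 := fun s hs =>
    Real.sqrt_le_sqrt (by nlinarith [hs.1])
  have hσmono : ∀ t s : ℝ, t ≤ s → σ s ≤ σ t := fun t s hts =>
    Real.sqrt_le_sqrt (by nlinarith)
  set E : ℝ := Real.exp (C * σ0) with hEdef
  have hE1 : 1 ≤ E := Real.one_le_exp (mul_nonneg hC.le (Real.sqrt_nonneg _))
  have hσ0pos : 0 < σ0 := Real.sqrt_pos.2 (by nlinarith)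
  -- derivative of σ
  have hσd : ∀ s ∈ Set.Ico (0:ℝ) T, HasDerivAt σ (-(σ s)⁻¹) s := by
    intro s hs
    have hne : 2 * (T - s) ≠ 0 := by nlinarith [hs.2]
    have h1 : HasDerivAt (fun y : ℝ => 2 * (T - y)) (-2) s := by
      simpa using ((hasDerivAt_id s).const_sub T).const_mul 2
    have h2 : HasDerivAt σ (1 / (2 * Real.sqrt (2 * (T - s))) * (-2)) s :=
      (Real.hasDerivAt_sqrt hne).comp s h1
    have hσne : σ s ≠ 0 := (hσpos s hs).ne'
    have h3 : 1 / (2 * σ s) * (-2 : ℝ) = -(σ s)⁻¹ := by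
      field_simp
    rw [← h3]; exact h2
  -- derivative of f
  have hfd : ∀ s ∈ Set.Ico (0:ℝ) T, HasDerivAt f (-(2 * lam' s / (lam s)^3)) s := by
    intro s hs
    have hl := hpos s hs
    have hne : lam s ≠ 0 := hl.ne'
    have h1 : HasDerivAt (fun y => (lam y)^2) (2 * lam s * lam' s) s := by
      exact ((hd s hs).pow 2).congr_deriv (by norm_num)
    have h2 := h1.inv (by positivity)
    refine h2.congr_deriv ?_
    field_simp
  -- limits
  have hflim : Filter.Tendsto f (nhdsWithin T (Set.Iio T)) (nhds 0) := by
    have h1 : Filter.Tendsto (fun s => (lam s)^2) (nhdsWithin T (Set.Iio T)) Filter.atTop := by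
      simpa [sq] using hlim.atTop_mul_atTop₀ hlim
    exact h1.inv_tendsto_atTop
  have hσlim : Filter.Tendsto σ (nhdsWithin T (Set.Iio T)) (nhds 0) := by
    have hc : Continuous σ :=
      Real.continuous_sqrt.comp (continuous_const.mul (continuous_const.sub continuous_id))
    have h := (hc.tendsto T).mono_left (nhdsWithin_le_nhds (s := Set.Iio T))
    have hσT : σ T = 0 := by rw [hσdef]; simp
    rw [hσT] at h
    exact h
  have hexplim : ∀ c : ℝ, Filter.Tendsto (fun s => Real.exp (c * σ s) * f s)
      (nhdsWithin T (Set.Iio T)) (nhds 0) := by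
    intro c
    have h1 : Filter.Tendsto (fun s => Real.exp (c * σ s)) (nhdsWithin T (Set.Iio T))
        (nhds 1) := by
      have h2 := hσlim.const_mul c
      rw [mul_zero] at h2
      have h3 := (Real.continuous_exp.tendsto 0).comp h2
      rw [Real.exp_zero] at h3
      exact h3
    have h4 := h1.mul hflim
    rw [mul_zero] at h4
    exact h4
  -- key two-sided bound at each t
  have main : ∀ t ∈ Set.Ico (0:ℝ) T,
      Real.exp (-(C * σ t)) * f t ≤ (2 + C * σ t) * (T - t) ∧
      (2 - C * σ t * E) * (T - t) ≤ Real.exp (C * σ t) * f t := by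
    intro t ht
    have htT : t < T := ht.2
    have hsub : Set.Ico t T ⊆ Set.Ico (0:ℝ) T := fun s hs => ⟨le_trans ht.1 hs.1, hs.2⟩
    constructor
    · -- upper bound via g = e^{-Cσ} f
      have hg : ∀ s ∈ Set.Ico t T, HasDerivAt (fun s => Real.exp (-(C * σ s)) * f s)
          (Real.exp (-(C * σ s)) * (C * (σ s)⁻¹ * f s - 2 * lam' s / (lam s)^3)) s := by
        intro s hs
        have hs0 := hsub hs
        have h1 : HasDerivAt (fun y => -(C * σ y)) (C * (σ s)⁻¹) s := by
          have := ((hσd s hs0).const_mul C).neg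
          exact this.congr_deriv (by ring)
        have h2 := (h1.exp).mul (hfd s hs0)
        exact h2.congr_deriv (by ring)
      have hB : ∀ s ∈ Set.Ico t T, -(2 + C * σ t) ≤
          Real.exp (-(C * σ s)) * (C * (σ s)⁻¹ * f s - 2 * lam' s / (lam s)^3) := by
        intro s hs
        have hs0 := hsub hs
        have hx := hub s hs0
        have hkey : C * (σ s)⁻¹ * f s = C * ((lam s)^2 * σ s)⁻¹ := by
          rw [hfdef, mul_inv]; ring
        have hin : -(2 + C * σ s) ≤ C * (σ s)⁻¹ * f s - 2 * lam' s / (lam s)^3 := by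
          rw [hkey]; linarith
        have he1 : Real.exp (-(C * σ s)) ≤ 1 :=
          Real.exp_le_one_iff.2 (by nlinarith [hσpos s hs0])
        have he0 : 0 < Real.exp (-(C * σ s)) := Real.exp_pos _
        have hσs : σ s ≤ σ t := hσmono t s hs.1
        have hσsn : 0 < σ s := hσpos s hs0
        nlinarith [mul_le_mul_of_nonneg_left hin he0.le,
          mul_nonneg (sub_nonneg.2 he1) (by positivity : (0:ℝ) ≤ 2 + C * σ s)]
      have hl0 : Filter.Tendsto (fun s => Real.exp (-(C * σ s)) * f s)
          (nhdsWithin T (Set.Iio T)) (nhds 0) :=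
        (hexplim (-C)).congr (by intro s; rw [neg_mul])
      have h := aux_le t T (2 + C * σ t) 0 htT _ _ hg hB hl0
      have h' : Real.exp (-(C * σ t)) * f t ≤ 0 + (2 + C * σ t) * (T - t) := h
      linarith
    · -- lower bound via g = -(e^{Cσ} f)
      have hg : ∀ s ∈ Set.Ico t T, HasDerivAt (fun s => -(Real.exp (C * σ s) * f s))
          (-(Real.exp (C * σ s) * (-(C * (σ s)⁻¹ * f s) - 2 * lam' s / (lam s)^3))) s := by
        intro s hs
        have hs0 := hsub hs
        have h1 : HasDerivAt (fun y => C * σ y) (-(C * (σ s)⁻¹)) s := by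
          have := (hσd s hs0).const_mul C
          exact this.congr_deriv (by ring)
        have h2 := ((h1.exp).mul (hfd s hs0)).neg
        exact h2.congr_deriv (by ring)
      have hB : ∀ s ∈ Set.Ico t T, -(C * σ t * E - 2) ≤
          -(Real.exp (C * σ s) * (-(C * (σ s)⁻¹ * f s) - 2 * lam' s / (lam s)^3)) := by
        intro s hs
        have hs0 := hsub hs
        have hx := hlb s hs0
        have hkey : C * (σ s)⁻¹ * f s = C * ((lam s)^2 * σ s)⁻¹ := by
          rw [hfdef, mul_inv]; ring
        have hin : -(C * (σ s)⁻¹ * f s) - 2 * lam' s / (lam s)^3 ≤ -2 + C * σ s := by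
          rw [hkey]; linarith
        have he1 : 1 ≤ Real.exp (C * σ s) :=
          Real.one_le_exp (mul_nonneg hC.le (Real.sqrt_nonneg _))
        have heE : Real.exp (C * σ s) ≤ E := by
          rw [hEdef]
          exact Real.exp_le_exp.2 (mul_le_mul_of_nonneg_left (hσ0 s hs0) hC.le)
        have he0 : 0 < Real.exp (C * σ s) := Real.exp_pos _
        have hσs : σ s ≤ σ t := hσmono t s hs.1
        have hσsn : 0 < σ s := hσpos s hs0
        have hme : C * σ s * Real.exp (C * σ s) ≤ C * σ t * E := by
          have ha : C * σ s ≤ C * σ t := mul_le_mul_of_nonneg_left hσs hC.le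
          exact mul_le_mul ha heE he0.le (mul_nonneg hC.le (le_trans hσsn.le hσs))
        nlinarith [mul_le_mul_of_nonneg_left hin he0.le, hme, he1]
      have hl0 : Filter.Tendsto (fun s => -(Real.exp (C * σ s) * f s))
          (nhdsWithin T (Set.Iio T)) (nhds 0) := by
        have hn := (hexplim C).neg
        rw [neg_zero] at hn
        exact hn
      have h := aux_le t T (C * σ t * E - 2) 0 htT _ _ hg hB hl0
      have h' : -(Real.exp (C * σ t) * f t) ≤ 0 + (C * σ t * E - 2) * (T - t) := h
      linarith
  -- assemble the constant
  have hEpos : (0:ℝ) < E := lt_of_lt_of_le one_pos hE1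
  refine ⟨C + 2 * C * E + C ^ 2 * E * σ0 + C * E + 1,
    by nlinarith [mul_pos hC hEpos, mul_pos (mul_pos (mul_pos hC hC) hEpos) hσ0pos], ?_⟩
  intro t ht
  obtain ⟨hup, hlo⟩ := main t ht
  have htT : t < T := ht.2
  have hd0 : 0 < T - t := by linarith
  have hu : 0 < σ t := hσpos t ht
  have huσ0 : σ t ≤ σ0 := hσ0 t ht
  have hu2 : (σ t)^2 = 2 * (T - t) := hσsq t ht
  have hu3 : (σ t)^3 = σ t * (2 * (T - t)) := by rw [← hu2]; ring
  have hfpos : 0 < f t := inv_pos.2 (pow_pos (hpos t ht) 2)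
  have heE : Real.exp (C * σ t) ≤ E := by
    rw [hEdef]
    exact Real.exp_le_exp.2 (mul_le_mul_of_nonneg_left huσ0 hC.le)
  have hem : Real.exp (C * σ t) * Real.exp (-(C * σ t)) = 1 := by
    rw [← Real.exp_add]; simp
  have he1 : 1 ≤ Real.exp (C * σ t) :=
    Real.one_le_exp (mul_nonneg hC.le hu.le)
  have hep : 0 < Real.exp (C * σ t) := Real.exp_pos _
  have hemp : 0 < Real.exp (-(C * σ t)) := Real.exp_pos _
  have heml : 1 - C * σ t ≤ Real.exp (-(C * σ t)) := by
    have := Real.add_one_le_exp (-(C * σ t))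
    linarith
  -- e^{Cu} ≤ 1 + C u E
  have heub : Real.exp (C * σ t) ≤ 1 + C * σ t * E := by
    nlinarith [mul_le_mul_of_nonneg_right heml hep.le]
  -- upper: f t ≤ (1 + CuE)(2 + Cu)(T-t)
  have hfub : f t ≤ (1 + C * σ t * E) * ((2 + C * σ t) * (T - t)) := by
    have h1 : Real.exp (C * σ t) * (Real.exp (-(C * σ t)) * f t) ≤
        Real.exp (C * σ t) * ((2 + C * σ t) * (T - t)) :=
      mul_le_mul_of_nonneg_left hup hep.le
    have h2 : Real.exp (C * σ t) * (Real.exp (-(C * σ t)) * f t) = f t := by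
      rw [← mul_assoc, hem, one_mul]
    nlinarith
  -- lower: f t ≥ e^{-Cu}(2 - CuE)(T-t)
  have hflb : Real.exp (-(C * σ t)) * ((2 - C * σ t * E) * (T - t)) ≤ f t := by
    have h1 : Real.exp (-(C * σ t)) * ((2 - C * σ t * E) * (T - t)) ≤
        Real.exp (-(C * σ t)) * (Real.exp (C * σ t) * f t) :=
      mul_le_mul_of_nonneg_left hlo hemp.le
    have h2 : Real.exp (-(C * σ t)) * (Real.exp (C * σ t) * f t) = f t := by
      rw [← mul_assoc, mul_comm (Real.exp (-(C * σ t))), hem, one_mul]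
    linarith
  have hle1 : Real.exp (-(C * σ t)) ≤ 1 :=
    Real.exp_le_one_iff.2 (by nlinarith)
  have hfl2 : (2 - (C * E + 2 * C) * σ t) * (T - t) ≤ f t :=
    lower_est C E (σ t) (T - t) (Real.exp (-(C * σ t))) (f t) hC hE1 hu hd0 heml hle1 hflb
  have harith := arith_final C E σ0 (σ t) (T - t) (f t) hC hE1 hσ0pos hu huσ0 hd0 hfub hfl2
  show |f t - 2 * (T - t)| ≤ (C + 2 * C * E + C ^ 2 * E * σ0 + C * E + 1) * (σ t) ^ 3
  rw [hu3]
  exact harith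
end

section
/- Suppose g : [0,T) → ℝ is C¹ and satisfies (g·A)'(t) = −Δ(t) + δ(t) where A(t) > 0, |Δ(t)| ≤ ε(t)·Λ(t)^{−1} with ε(t) → 0, |δ(t)| ≤ C Λ(t)^{−2}, g(t)A(t) → 0 as t → T, and A(t) ≥ c Λ(t)^{−2} for constants c, C > 0, where Λ(t) = (2(T−t))^{−1/2}. Then g(t) = O(Λ(t)^{−1}), i.e., there exists C' with |g(t)| ≤ C' Λ(t)^{−1} for all t ∈ [0,T). -/
open Real Set Filter

/-- if (g·A)' = −Δ + δ with |Δ| ≤ ε·Λ⁻¹, ε → 0, |δ| ≤ CΛ⁻²,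
g·A → 0 as t → T, and A ≥ cΛ⁻², where Λ(t) = (2(T−t))^{−1/2}, then g = O(Λ⁻¹). -/
theorem stmt_11 (T c C : ℝ) (hT : 0 < T) (hc : 0 < c) (hC : 0 < C)
    (g A Δ δ ε : ℝ → ℝ)
    (hg : ContinuousOn g (Set.Ico (0:ℝ) T))
    (hΔc : ContinuousOn Δ (Set.Ico (0:ℝ) T))
    (hδc : ContinuousOn δ (Set.Ico (0:ℝ) T))
    (hderiv : ∀ t ∈ Set.Ico (0:ℝ) T, HasDerivAt (fun s => g s * A s) (-Δ t + δ t) t)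
    (hApos : ∀ t ∈ Set.Ico (0:ℝ) T, 0 < A t)
    (hεnn : ∀ t ∈ Set.Ico (0:ℝ) T, 0 ≤ ε t)
    (hεlim : Filter.Tendsto ε (nhdsWithin T (Set.Iio T)) (nhds 0))
    (hΔ : ∀ t ∈ Set.Ico (0:ℝ) T, |Δ t| ≤ ε t * Real.sqrt (2 * (T - t)))
    (hδ : ∀ t ∈ Set.Ico (0:ℝ) T, |δ t| ≤ C * (2 * (T - t)))
    (hgA : Filter.Tendsto (fun t => g t * A t) (nhdsWithin T (Set.Iio T)) (nhds 0))
    (hA : ∀ t ∈ Set.Ico (0:ℝ) T, c * (2 * (T - t)) ≤ A t) :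
    ∃ C' > 0, ∀ t ∈ Set.Ico (0:ℝ) T, |g t| ≤ C' * Real.sqrt (2 * (T - t)) := by
  -- Step 1: find t₀ ∈ [0,T) with ε ≤ 1 on [t₀, T)
  rw [Metric.tendsto_nhdsWithin_nhds] at hεlim
  obtain ⟨d, hd, hdε⟩ := hεlim 1 one_pos
  set t₀ : ℝ := max 0 (T - d/2) with ht₀def
  have ht₀0 : 0 ≤ t₀ := le_max_left _ _
  have ht₀T : t₀ < T := max_lt hT (by linarith)
  have hε1 : ∀ u ∈ Set.Ico t₀ T, ε u ≤ 1 := by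
    intro u hu
    have h2 : dist u T < d := by
      rw [Real.dist_eq, abs_of_nonpos (by linarith [hu.2])]
      have := le_max_right 0 (T - d/2)
      have := hu.1
      simp only [ht₀def] at this
      have h3 : T - d/2 ≤ u := le_trans (le_max_right 0 (T - d/2)) this
      linarith
    have h4 := hdε hu.2 h2
    rw [Real.dist_eq, sub_zero] at h4
    exact (le_abs_self _).trans h4.le
  -- Step 2: key bound for t ∈ [t₀, T)
  have key : ∀ t ∈ Set.Ico t₀ T, |g t * A t|
      ≤ (T - t) * (Real.sqrt (2*(T-t)) + 2*C*(T-t)) := by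
    intro t ht
    have ht0 : (0:ℝ) ≤ t := le_trans ht₀0 ht.1
    have htT : t < T := ht.2
    refine le_of_forall_pos_le_add (fun η hη => ?_)
    rw [Metric.tendsto_nhdsWithin_nhds] at hgA
    obtain ⟨d2, hd2, hF2⟩ := hgA η hη
    set s : ℝ := max t (T - min d2 (T - t) / 2) with hs_def
    have hmin : 0 < min d2 (T - t) := lt_min hd2 (by linarith)
    have hts : t ≤ s := le_max_left _ _
    have hsT : s < T := max_lt htT (by linarith)
    have hsd : dist s T < d2 := by
      rw [Real.dist_eq, abs_of_nonpos (by linarith)]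
      have h5 : T - min d2 (T - t) / 2 ≤ s := le_max_right _ _
      have h6 : min d2 (T - t) ≤ d2 := min_le_left _ _
      linarith
    have hFs : |g s * A s| < η := by
      have := hF2 (show s ∈ Set.Iio T from hsT) hsd
      rwa [Real.dist_eq, sub_zero] at this
    have hsub : Set.uIcc t s ⊆ Set.Ico 0 T := by
      rw [Set.uIcc_of_le hts]
      intro u hu
      exact ⟨le_trans ht0 hu.1, lt_of_le_of_lt hu.2 hsT⟩
    have hcont : ContinuousOn (fun u => -Δ u + δ u) (Set.uIcc t s) :=
      ((hΔc.mono hsub).neg.add (hδc.mono hsub))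
    have hftc : ∫ u in t..s, (-Δ u + δ u) = g s * A s - g t * A t :=
      intervalIntegral.integral_eq_sub_of_hasDerivAt
        (fun u hu => hderiv u (hsub hu)) hcont.intervalIntegrable
    have hKnn : 0 ≤ Real.sqrt (2*(T-t)) + 2*C*(T-t) := by
      have := Real.sqrt_nonneg (2*(T-t)); nlinarith
    have hbound : ∀ u ∈ Set.uIoc t s, ‖-Δ u + δ u‖
        ≤ Real.sqrt (2*(T-t)) + 2*C*(T-t) := by
      intro u hu
      have hu' : u ∈ Set.uIcc t s := Set.uIoc_subset_uIcc hu
      have huI : u ∈ Set.Ico 0 T := hsub hu'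
      have hut : t ≤ u := by
        rw [Set.uIcc_of_le hts] at hu'; exact hu'.1
      have h1 : |Δ u| ≤ Real.sqrt (2*(T-u)) := by
        have h7 := hΔ u huI
        have hε' : ε u ≤ 1 := hε1 u ⟨le_trans ht.1 hut, huI.2⟩
        nlinarith [Real.sqrt_nonneg (2*(T-u)), hεnn u huI]
      have h2 : |δ u| ≤ C*(2*(T-u)) := hδ u huI
      have hmono : Real.sqrt (2*(T-u)) ≤ Real.sqrt (2*(T-t)) :=
        Real.sqrt_le_sqrt (by linarith)
      have h8 : ‖-Δ u + δ u‖ ≤ |Δ u| + |δ u| := by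
        rw [Real.norm_eq_abs]
        calc |(-Δ u + δ u)| ≤ |(-Δ u)| + |δ u| := abs_add_le _ _
        _ = |Δ u| + |δ u| := by rw [abs_neg]
      nlinarith [mul_nonneg hC.le (sub_nonneg.mpr hut)]
    have hint : ‖∫ u in t..s, (-Δ u + δ u)‖
        ≤ (Real.sqrt (2*(T-t)) + 2*C*(T-t)) * |s - t| :=
      intervalIntegral.norm_integral_le_of_norm_le_const hbound
    have hst : |s - t| ≤ T - t := by
      rw [abs_of_nonneg (by linarith)]; linarith
    have hgt : g t * A t = g s * A s - ∫ u in t..s, (-Δ u + δ u) := by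
      rw [hftc]; ring
    calc |g t * A t| ≤ |g s * A s| + ‖∫ u in t..s, (-Δ u + δ u)‖ := by
          rw [hgt, Real.norm_eq_abs]; exact abs_sub _ _
      _ ≤ η + (Real.sqrt (2*(T-t)) + 2*C*(T-t)) * (T - t) := by
          have := mul_le_mul_of_nonneg_left hst hKnn
          linarith
      _ = (T - t) * (Real.sqrt (2*(T-t)) + 2*C*(T-t)) + η := by ring
  -- Step 3: translate to bound on |g| on [t₀, T)
  set K₁ : ℝ := (1 + 2*C*Real.sqrt (T/2)) / (2*c) with hK₁
  have hK₁nn : 0 ≤ K₁ := by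
    apply div_nonneg _ (by linarith)
    have := Real.sqrt_nonneg (T/2); nlinarith
  have hbig : ∀ t ∈ Set.Ico t₀ T, |g t| ≤ K₁ * Real.sqrt (2*(T-t)) := by
    intro t ht
    have htI : t ∈ Set.Ico 0 T := ⟨le_trans ht₀0 ht.1, ht.2⟩
    have hApt := hApos t htI
    have hAt := hA t htI
    have hk := key t ht
    have habs : |g t * A t| = |g t| * A t := by
      rw [abs_mul, abs_of_pos hApt]
    rw [habs] at hk
    have h1 : |g t| * (c * (2*(T-t))) ≤ (T - t) * (Real.sqrt (2*(T-t)) + 2*C*(T-t)) :=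
      le_trans (mul_le_mul_of_nonneg_left hAt (abs_nonneg _)) hk
    have hTt : 0 < T - t := by linarith [ht.2]
    have h2 : |g t| * (2*c) ≤ Real.sqrt (2*(T-t)) + 2*C*(T-t) := by
      nlinarith
    -- T - t ≤ sqrt(T/2) * sqrt(2*(T-t))
    have h3 : T - t ≤ Real.sqrt (T/2) * Real.sqrt (2*(T-t)) := by
      rw [← Real.sqrt_mul (by linarith)]
      have : (T - t) = Real.sqrt ((T-t)^2) := by
        rw [Real.sqrt_sq hTt.le]
      rw [this]
      apply Real.sqrt_le_sqrt
      nlinarith [ht.2, htI.1]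
    have h4 : |g t| * (2*c) ≤ (1 + 2*C*Real.sqrt (T/2)) * Real.sqrt (2*(T-t)) := by
      nlinarith
    rw [hK₁, div_mul_eq_mul_div, le_div_iff₀ (by linarith)]
    linarith [h4]
  -- Step 4: compactness bound on [0, t₀]
  have hsub2 : Set.Icc 0 t₀ ⊆ Set.Ico 0 T := fun u hu => ⟨hu.1, lt_of_le_of_lt hu.2 ht₀T⟩
  obtain ⟨M, hM⟩ := isCompact_Icc.exists_bound_of_continuousOn (hg.mono hsub2)
  set M' : ℝ := max M 0 with hM'
  have hM'nn : 0 ≤ M' := le_max_right _ _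
  have hsq : 0 < Real.sqrt (2*(T-t₀)) := Real.sqrt_pos.mpr (by linarith)
  refine ⟨K₁ + M' / Real.sqrt (2*(T-t₀)) + 1, by positivity, ?_⟩
  intro t ht
  have hsqt : 0 ≤ Real.sqrt (2*(T-t)) := Real.sqrt_nonneg _
  rcases le_or_gt t₀ t with hcase | hcase
  · have := hbig t ⟨hcase, ht.2⟩
    have hrest : 0 ≤ (M' / Real.sqrt (2*(T-t₀)) + 1) * Real.sqrt (2*(T-t)) := by positivity
    nlinarith
  · have htIcc : t ∈ Set.Icc 0 t₀ := ⟨ht.1, hcase.le⟩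
    have h1 : |g t| ≤ M' := le_trans (by rw [← Real.norm_eq_abs]; exact hM t htIcc) (le_max_left _ _)
    have h2 : Real.sqrt (2*(T-t₀)) ≤ Real.sqrt (2*(T-t)) :=
      Real.sqrt_le_sqrt (by linarith)
    have h3 : M' ≤ M' / Real.sqrt (2*(T-t₀)) * Real.sqrt (2*(T-t)) := by
      rw [div_mul_eq_mul_div, le_div_iff₀ hsq]
      exact mul_le_mul_of_nonneg_left h2 hM'nn
    have hrest : 0 ≤ (K₁ + 1) * Real.sqrt (2*(T-t)) := by positivity
    nlinarith
end

section
/- With σ̄ the quadratic extension defined above, if |σ_θ(θ̲)|, |σ_θ(θ̄)| ≤ δ, θ̲ ≤ δ, π − θ̄ ≤ δ, and θ̲ ≥ cδ, π − θ̄ ≥ cδ for some 0 < c ≤ 1, then ‖σ − 1‖_{C⁰([θ̲,θ̄])} ≤ ‖σ̄ − 1‖_{C⁰([0,π])} ≤ ‖σ − 1‖_{C⁰([θ̲,θ̄])} + Cδ² for a constant C depending only on c. Moreover σ̄ − 1 is monotone decreasing on [0, θ̲] if σ_θ(θ̲) ≤ 0 and monotone increasing on [θ̄, π] if σ_θ(θ̄)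 ≥ 0. -/
open Real Set

set_option maxHeartbeats 1000000 in
/-- for the piecewise-quadratic Neumann extension σ̄ of σ, if the
boundary slopes and endpoint gaps are of size δ and the gaps are ≥ cδ, then
‖σ−1‖_{C⁰([θ̲,θ̄])} ≤ ‖σ̄−1‖_{C⁰([0,π])} ≤ ‖σ−1‖_{C⁰([θ̲,θ̄])} + Cδ² with C = C(c);
moreover σ̄ − 1 is decreasing on [0,θ̲] if σ_θ(θ̲) ≤ 0 and increasing on [θ̄,π]
if σ_θ(θ̄) ≥ 0. -/
theorem stmt_14 (c : ℝ) (hc0 : 0 < c) (hc1 : c ≤ 1) :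
    ∃ C > 0, ∀ (σ : ℝ → ℝ) (δ t1 t2 : ℝ), ContDiff ℝ 2 σ →
      0 < δ → 0 < t1 → t1 < t2 → t2 < Real.pi →
      |deriv σ t1| ≤ δ → |deriv σ t2| ≤ δ →
      t1 ≤ δ → Real.pi - t2 ≤ δ →
      c * δ ≤ t1 → c * δ ≤ Real.pi - t2 →
      let a1 : ℝ := deriv σ t1 / (2 * t1)
      let c1 : ℝ := σ t1 - 1 - a1 * t1 ^ 2
      let a2 : ℝ := -(deriv σ t2) / (2 * (Real.pi - t2))
      let b2 : ℝ := -2 * Real.pi * a2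
      let c2 : ℝ := σ t2 - 1 - a2 * t2 ^ 2 - b2 * t2
      let sbar : ℝ → ℝ := fun θ =>
        if θ < t1 then 1 + (a1 * θ ^ 2 + c1)
        else if θ ≤ t2 then σ θ
        else 1 + (a2 * θ ^ 2 + b2 * θ + c2)
      sSup ((fun θ => |σ θ - 1|) '' Set.Icc t1 t2) ≤
          sSup ((fun θ => |sbar θ - 1|) '' Set.Icc 0 Real.pi) ∧
        sSup ((fun θ => |sbar θ - 1|) '' Set.Icc 0 Real.pi) ≤
          sSup ((fun θ => |σ θ - 1|) '' Set.Icc t1 t2) + C * δ ^ 2 ∧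
        (deriv σ t1 ≤ 0 → AntitoneOn (fun θ => sbar θ - 1) (Set.Icc 0 t1)) ∧
        (0 ≤ deriv σ t2 → MonotoneOn (fun θ => sbar θ - 1) (Set.Icc t2 Real.pi)) := by
  refine ⟨1, one_pos, ?_⟩
  intro σ δ t1 t2 hσ hδ ht1 ht12 ht2 hd1 hd2 ht1δ ht2δ hct1 hct2
  intro a1 c1 a2 b2 c2 sbar
  have ha1 : a1 = deriv σ t1 / (2 * t1) := rfl
  have hc1 : c1 = σ t1 - 1 - a1 * t1 ^ 2 := rfl
  have ha2 : a2 = -(deriv σ t2) / (2 * (Real.pi - t2)) := rfl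
  have hb2 : b2 = -2 * Real.pi * a2 := rfl
  have hsbarb : ∀ θ, sbar θ =
      if θ < t1 then 1 + (a1 * θ ^ 2 + c1)
      else if θ ≤ t2 then σ θ
      else 1 + (a2 * θ ^ 2 + b2 * θ + c2) := fun _ => rfl
  have hc2 : c2 = σ t2 - 1 - a2 * t2 ^ 2 - b2 * t2 := rfl
  clear_value sbar c2 b2 a2 c1 a1
  have hπ : 0 < Real.pi := Real.pi_pos
  have ht12' : t1 ≤ t2 := le_of_lt ht12
  have he : 0 < Real.pi - t2 := by linarith
  have hcont : Continuous fun θ => |σ θ - 1| :=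
    ((hσ.continuous).sub continuous_const).abs
  have hAbdd : BddAbove ((fun θ => |σ θ - 1|) '' Set.Icc t1 t2) :=
    ((isCompact_Icc).image hcont).bddAbove
  set S := sSup ((fun θ => |σ θ - 1|) '' Set.Icc t1 t2) with hSdef
  have hmemS : ∀ θ ∈ Set.Icc t1 t2, |σ θ - 1| ≤ S := fun θ hθ =>
    le_csSup hAbdd ⟨θ, hθ, rfl⟩
  -- sbar equals σ on the middle interval
  have hsbar_mid : ∀ θ ∈ Set.Icc t1 t2, sbar θ = σ θ := by
    intro θ hθ
    rw [hsbarb θ, if_neg (not_lt.2 hθ.1), if_pos hθ.2]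
  -- formula on the left
  have hL : ∀ θ ∈ Set.Icc 0 t1, sbar θ - 1 = a1 * θ ^ 2 + c1 := by
    intro θ hθ
    rcases lt_or_eq_of_le hθ.2 with h | h
    · rw [hsbarb θ, if_pos h]; ring
    · subst h
      rw [hsbar_mid θ ⟨le_refl _, ht12'⟩, hc1]; ring
  -- formula on the right
  have hR : ∀ θ ∈ Set.Icc t2 Real.pi, sbar θ - 1 = a2 * θ ^ 2 + b2 * θ + c2 := by
    intro θ hθ
    rcases eq_or_lt_of_le hθ.1 with h | h
    · rw [← h, hsbar_mid t2 ⟨ht12', le_refl _⟩, hc2]; ring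
    · rw [hsbarb θ, if_neg (not_lt.2 (le_of_lt (ht12.trans h))), if_neg (not_le.2 h)]
      ring
  -- pointwise bound
  have hbound : ∀ θ ∈ Set.Icc 0 Real.pi, |sbar θ - 1| ≤ S + δ ^ 2 := by
    intro θ hθ
    rcases lt_or_ge θ t1 with h | h
    · have hθ1 : θ ∈ Set.Icc 0 t1 := ⟨hθ.1, le_of_lt h⟩
      rw [hL θ hθ1]
      have heq : a1 * θ ^ 2 + c1 = (σ t1 - 1) + a1 * (θ ^ 2 - t1 ^ 2) := by
        rw [hc1]; ring
      rw [heq]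
      have hd : -δ ≤ deriv σ t1 ∧ deriv σ t1 ≤ δ := abs_le.1 hd1
      have hsq : θ ^ 2 ≤ t1 ^ 2 := pow_le_pow_left₀ hθ1.1 hθ1.2 2
      have hsq0 : 0 ≤ θ ^ 2 := sq_nonneg θ
      have h1 : |a1 * (θ ^ 2 - t1 ^ 2)| ≤ δ ^ 2 := by
        rw [ha1, abs_le]
        constructor
        · rw [div_mul_eq_mul_div, le_div_iff₀ (by positivity : (0:ℝ) < 2 * t1)]
          nlinarith [mul_nonneg (sub_nonneg.2 hd.2) (sub_nonneg.2 hsq),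
            mul_nonneg hδ.le (sub_nonneg.2 hsq), mul_pos hδ ht1,
            mul_nonneg hδ.le hsq0]
        · rw [div_mul_eq_mul_div, div_le_iff₀ (by positivity : (0:ℝ) < 2 * t1)]
          nlinarith [mul_nonneg (by linarith [hd.1] : (0:ℝ) ≤ δ + deriv σ t1) (sub_nonneg.2 hsq),
            mul_nonneg hδ.le (sub_nonneg.2 hsq), mul_pos hδ ht1,
            mul_nonneg hδ.le hsq0]
      calc |(σ t1 - 1) + a1 * (θ ^ 2 - t1 ^ 2)|
          ≤ |σ t1 - 1| + |a1 * (θ ^ 2 - t1 ^ 2)| := abs_add_le _ _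
        _ ≤ S + δ ^ 2 := add_le_add (hmemS t1 ⟨le_refl _, ht12'⟩) h1
    rcases le_or_gt θ t2 with h2 | h2
    · rw [hsbar_mid θ ⟨h, h2⟩]
      have := hmemS θ ⟨h, h2⟩
      nlinarith [sq_nonneg δ]
    · have hθ2 : θ ∈ Set.Icc t2 Real.pi := ⟨le_of_lt h2, hθ.2⟩
      rw [hR θ hθ2]
      have heq : a2 * θ ^ 2 + b2 * θ + c2
          = (σ t2 - 1) + a2 * ((θ - t2) * (θ + t2 - 2 * Real.pi)) := by
        rw [hc2, hb2]; ring
      rw [heq]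
      have hd : -δ ≤ deriv σ t2 ∧ deriv σ t2 ≤ δ := abs_le.1 hd2
      have hu0 : 0 ≤ θ - t2 := by linarith
      have hue : θ - t2 ≤ Real.pi - t2 := by linarith [hθ.2]
      have huδ : θ - t2 ≤ δ := hue.trans ht2δ
      have hv0 : 0 ≤ 2 * Real.pi - θ - t2 := by linarith [hθ.2]
      have hve : 2 * Real.pi - θ - t2 ≤ 2 * (Real.pi - t2) := by linarith
      have h1 : |a2 * ((θ - t2) * (θ + t2 - 2 * Real.pi))| ≤ δ ^ 2 := by
        rw [ha2, abs_le]
        constructor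
        · rw [div_mul_eq_mul_div, le_div_iff₀ (by positivity : (0:ℝ) < 2 * (Real.pi - t2))]
          nlinarith [mul_nonneg (mul_nonneg (by linarith [hd.1] : (0:ℝ) ≤ δ + deriv σ t2) hu0) hv0,
            mul_nonneg (mul_nonneg hδ.le hu0) (sub_nonneg.2 hve),
            mul_nonneg (mul_nonneg (sub_nonneg.2 huδ) hδ.le)
              (by positivity : (0:ℝ) ≤ 2 * (Real.pi - t2)),
            mul_pos hδ he]
        · rw [div_mul_eq_mul_div, div_le_iff₀ (by positivity : (0:ℝ) < 2 * (Real.pi - t2))]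
          nlinarith [mul_nonneg (mul_nonneg (sub_nonneg.2 hd.2) hu0) hv0,
            mul_nonneg (mul_nonneg hδ.le hu0) (sub_nonneg.2 hve),
            mul_nonneg (mul_nonneg (sub_nonneg.2 huδ) hδ.le)
              (by positivity : (0:ℝ) ≤ 2 * (Real.pi - t2)),
            mul_pos hδ he]
      calc |(σ t2 - 1) + a2 * ((θ - t2) * (θ + t2 - 2 * Real.pi))|
          ≤ |σ t2 - 1| + |a2 * ((θ - t2) * (θ + t2 - 2 * Real.pi))| := abs_add_le _ _
        _ ≤ S + δ ^ 2 := add_le_add (hmemS t2 ⟨ht12', le_refl _⟩) h1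
  have hBbdd : BddAbove ((fun θ => |sbar θ - 1|) '' Set.Icc 0 Real.pi) :=
    ⟨S + δ ^ 2, by rintro x ⟨θ, hθ, rfl⟩; exact hbound θ hθ⟩
  have hAne : ((fun θ => |σ θ - 1|) '' Set.Icc t1 t2).Nonempty :=
    ⟨_, ⟨t1, ⟨le_refl _, ht12'⟩, rfl⟩⟩
  have hBne : ((fun θ => |sbar θ - 1|) '' Set.Icc 0 Real.pi).Nonempty :=
    ⟨_, ⟨0, ⟨le_refl _, hπ.le⟩, rfl⟩⟩
  refine ⟨?_, ?_, ?_, ?_⟩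
  · -- sSup A ≤ sSup B
    apply csSup_le_csSup hBbdd hAne
    rintro x ⟨θ, hθ, rfl⟩
    exact ⟨θ, ⟨le_trans ht1.le hθ.1, le_trans hθ.2 ht2.le⟩,
      show |sbar θ - 1| = |σ θ - 1| by rw [hsbar_mid θ hθ]⟩
  · -- sSup B ≤ S + δ²
    rw [one_mul]
    apply csSup_le hBne
    rintro x ⟨θ, hθ, rfl⟩
    exact hbound θ hθ
  · -- antitone
    intro hd1neg x hx y hy hxy
    simp only
    rw [hL x hx, hL y hy]
    have ha1' : a1 ≤ 0 := by
      rw [ha1]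
      exact div_nonpos_iff.2 (Or.inr ⟨hd1neg, by positivity⟩)
    have hxy2 : x ^ 2 ≤ y ^ 2 := pow_le_pow_left₀ hx.1 hxy 2
    nlinarith [mul_nonpos_of_nonpos_of_nonneg ha1' (sub_nonneg.2 hxy2)]
  · -- monotone
    intro hd2pos x hx y hy hxy
    simp only
    rw [hR x hx, hR y hy]
    have ha2' : a2 ≤ 0 := by
      rw [ha2]
      exact div_nonpos_iff.2 (Or.inr ⟨by linarith, by positivity⟩)
    have key : 0 ≤ (-a2) * ((y - x) * (2 * Real.pi - x - y)) :=
      mul_nonneg (neg_nonneg.2 ha2')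
        (mul_nonneg (sub_nonneg.2 hxy) (by linarith [hx.2, hy.2]))
    rw [hb2]
    nlinarith [key]
end
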